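/- The two conics C₁ = {[x:y:z] ∈ ℂℙ² : x² + y² − y·z = 0} and C₂ = {[x:y:z] ∈ ℂℙ² : x² − y² − y·z = 0} have exactly one common point: C₁ ∩ C₂ = {[0:0:1]}. -/
import Mathlib


open MvPolynomial Projectivization

/-- The two conics `C₁ = {x² + y² − y·z = 0}` and `C₂ = {x² − y² − y·z = 0}` in `ℂℙ²`
meet in exactly one point, `[0:0:1]`.  (A point of the projectivization of `ℂ³` lies on the
zero set of a homogeneous polynomial iff the polynomial vanishes on its representative
`P.rep`; this is invariant under scaling of the representative.) -/
theorem stmt_8 :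
    {P : Projectivization ℂ (Fin 3 → ℂ) |
        eval P.rep (X 0 ^ 2 + X 1 ^ 2 - X 1 * X 2 : MvPolynomial (Fin 3) ℂ) = 0} ∩
    {P : Projectivization ℂ (Fin 3 → ℂ) |
        eval P.rep (X 0 ^ 2 - X 1 ^ 2 - X 1 * X 2 : MvPolynomial (Fin 3) ℂ) = 0} =
      {Projectivization.mk ℂ ![0, 0, 1] (fun h => by simpa using congrFun h 2)} := by
  ext P
  simp only [Set.mem_inter_iff, Set.mem_setOf_eq, Set.mem_singleton_iff, map_add, map_sub,
    map_mul, map_pow, eval_X]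
  constructor
  · rintro ⟨h1, h2⟩
    have hy : P.rep 1 = 0 := by
      have : (2 : ℂ) * P.rep 1 ^ 2 = 0 := by linear_combination h1 - h2
      have h := mul_eq_zero.1 this
      rcases h with h | h
      · norm_num at h
      · exact pow_eq_zero_iff (n := 2) (by norm_num) |>.1 h
    have hx : P.rep 0 = 0 := by
      have : P.rep 0 ^ 2 = 0 := by linear_combination h1 - (P.rep 1 - P.rep 2) * hy
      exact pow_eq_zero_iff (n := 2) (by norm_num) |>.1 this
    have hz : P.rep 2 ≠ 0 := by
      intro hz
      apply P.rep_nonzero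
      funext i
      fin_cases i <;> simp [hx, hy, hz]
    have hrep : P.rep = P.rep 2 • ![0, 0, 1] := by
      funext i
      fin_cases i <;> simp [hx, hy]
    have : Projectivization.mk ℂ P.rep P.rep_nonzero
        = Projectivization.mk ℂ ![0, 0, 1] (fun h => by simpa using congrFun h 2) := by
      rw [mk_eq_mk_iff]
      exact ⟨Units.mk0 _ hz, hrep.symm⟩
    rw [← this, mk_rep]
  · intro h
    have : Projectivization.mk ℂ P.rep P.rep_nonzero
        = Projectivization.mk ℂ ![0, 0, 1] (fun h => by simpa using congrFun h 2) := by
      rw [mk_rep]; exact h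
    rw [mk_eq_mk_iff] at this
    obtain ⟨c, hc⟩ := this
    have h0 : P.rep 0 = 0 := by rw [← hc]; simp
    have h1 : P.rep 1 = 0 := by rw [← hc]; simp
    constructor <;> rw [h0, h1] <;> ring
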